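/- arXiv:1204.5062 — 2 statements merged into one kernel-verified Lean document; each statement's English description precedes it below -/
import Mathlib

section
/- Let Φ be a frame for 𝕂^n with m vectors such that for every j = 1,…,n the submatrix Φ^(j) is in general position. Then the minimum of ‖Ψ‖₀ over all dual frames Ψ of Φ equals exactly n². -/
open Matrix

/-- The number of non-vanishing entries of a matrix (the `ℓ₀`-"norm"). -/
noncomputable def l0Norm {𝕂 : Type} [RCLike 𝕂] {n m : ℕ}
    (Ψ : Matrix (Fin n) (Fin m) 𝕂) : ℕ :=
  Set.ncard {p : Fin n × Fin m | Ψ p.1 p.2 ≠ 0}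

/-- The submatrix of `Φ` obtained by deleting the `j`-th row. -/
def deleteRow {𝕂 : Type} [RCLike 𝕂] {n m : ℕ}
    (Φ : Matrix (Fin n) (Fin m) 𝕂) (j : Fin n) :
    Matrix {i : Fin n // i ≠ j} (Fin m) 𝕂 :=
  fun i k => Φ i.1 k

/-- A matrix is in general position (relative to the cardinality `k`) if every
collection of `k` of its columns is linearly independent. -/
def InGeneralPosition {𝕂 : Type} [RCLike 𝕂] {l : Type} {m : ℕ}
    (M : Matrix l (Fin m) 𝕂) (k : ℕ) : Prop :=
  ∀ S : Finset (Fin m), S.card = k →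
    LinearIndependent 𝕂 (fun i : S => fun r => M r (i : Fin m))

-- Lemma A: each row of a dual has at least n nonzero entries
lemma row_card_ge {𝕂 : Type} [RCLike 𝕂] {n m : ℕ} [DecidableEq 𝕂]
    (Φ : Matrix (Fin n) (Fin m) 𝕂) (hm : n ≤ m)
    (hGP : ∀ j : Fin n, InGeneralPosition (deleteRow Φ j) (n - 1))
    (Ψ : Matrix (Fin n) (Fin m) 𝕂) (hΨ : Ψ * Φᴴ = 1) (j : Fin n) :
    n ≤ (Finset.univ.filter fun k => Ψ j k ≠ 0).card := by
  by_contra h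
  push_neg at h
  obtain ⟨S, hsub, -, hS⟩ := Finset.exists_subsuperset_card_eq
    (Finset.subset_univ (Finset.univ.filter fun k => Ψ j k ≠ 0))
    (by omega) (by simpa using by omega : n - 1 ≤ (Finset.univ : Finset (Fin m)).card)
  have hzero : ∀ k, Ψ j k = 0 := by
    have li := hGP j S hS
    rw [Fintype.linearIndependent_iff] at li
    have key := li (fun k => star (Ψ j k.1)) ?_
    · intro k
      by_contra hk
      have hkS : k ∈ S := hsub (Finset.mem_filter.mpr ⟨Finset.mem_univ _, hk⟩)
      have := key ⟨k, hkS⟩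
      simp only [star_eq_zero] at this
      exact hk this
    · funext r
      simp only [Pi.zero_apply, Finset.sum_apply, Pi.smul_apply, smul_eq_mul, deleteRow]
      rw [Finset.sum_coe_sort S (fun k => star (Ψ j k) * Φ r.1 k)]
      rw [Finset.sum_subset (Finset.subset_univ S) ?_]
      · have h1 : (Ψ * Φᴴ) j r.1 = 0 := by rw [hΨ]; exact Matrix.one_apply_ne (Ne.symm r.2)
        rw [Matrix.mul_apply] at h1
        calc ∑ k, star (Ψ j k) * Φ r.1 k
            = star (∑ k, Ψ j k * star (Φ r.1 k)) := by simp [star_sum, mul_comm]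
          _ = 0 := by
              rw [show (∑ k, Ψ j k * star (Φ r.1 k)) = 0 from by
                simpa [Matrix.conjTranspose_apply] using h1]
              simp
      · intro k _ hkS
        have : Ψ j k = 0 := by
          by_contra hk
          exact hkS (hsub (Finset.mem_filter.mpr ⟨Finset.mem_univ _, hk⟩))
        simp [this]
  have h1 : (Ψ * Φᴴ) j j = 1 := by rw [hΨ]; exact Matrix.one_apply_eq j
  rw [Matrix.mul_apply] at h1
  simp [hzero] at h1

lemma l0_eq_sum {𝕂 : Type} [RCLike 𝕂] {n m : ℕ} [DecidableEq 𝕂]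
    (Ψ : Matrix (Fin n) (Fin m) 𝕂) :
    l0Norm Ψ = ∑ j : Fin n, (Finset.univ.filter fun k => Ψ j k ≠ 0).card := by
  have hset : {p : Fin n × Fin m | Ψ p.1 p.2 ≠ 0}
      = ↑(Finset.univ.filter fun p : Fin n × Fin m => Ψ p.1 p.2 ≠ 0) := by
    ext p; simp
  rw [l0Norm, hset, Set.ncard_coe_finset]
  rw [Finset.card_eq_sum_card_fiberwise
    (f := Prod.fst) (t := Finset.univ) (fun x _ => Finset.mem_univ _)]
  refine Finset.sum_congr rfl fun j _ => ?_
  refine Finset.card_bij' (fun p _ => p.2) (fun k _ => (j, k)) ?_ ?_ ?_ ?_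
  · intro p hp
    simp only [Finset.mem_filter, Finset.mem_univ, true_and] at hp ⊢
    exact hp.2 ▸ hp.1
  · intro k hk
    simp only [Finset.mem_filter, Finset.mem_univ, true_and] at hk
    exact Finset.mem_filter.mpr ⟨Finset.mem_filter.mpr ⟨Finset.mem_univ _, hk⟩, rfl⟩
  · intro p hp
    simp only [Finset.mem_filter] at hp
    exact Prod.ext hp.2.symm rfl
  · intro k _
    rfl

lemma exists_sparse_dual {𝕂 : Type} [RCLike 𝕂] {n m : ℕ}
    (Φ : Matrix (Fin n) (Fin m) 𝕂) (hΦ : Φ.rank = n) :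
    ∃ Ψ : Matrix (Fin n) (Fin m) 𝕂, Ψ * Φᴴ = 1 ∧ l0Norm Ψ ≤ n ^ 2 := by
  classical
  -- the columns span everything
  have hspan : Submodule.span 𝕂 (Set.range Φᵀ) = ⊤ := by
    change Submodule.span 𝕂 (Set.range Φ.col) = ⊤
    rw [← Matrix.range_mulVecLin]
    apply Submodule.eq_top_of_finrank_eq
    rw [← Matrix.rank, hΦ, Module.finrank_pi]
    simp
  obtain ⟨b, hbsub, hbspan, hbli⟩ := exists_linearIndependent 𝕂 (Set.range Φᵀ)
  rw [hspan] at hbspan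
  have hbfin : b.Finite := hbli.setFinite
  haveI : Fintype b := hbfin.fintype
  have hbbasis : Module.Basis b 𝕂 (Fin n → 𝕂) := Module.Basis.mk hbli (by rw [Subtype.range_coe, hbspan])
  have hcard : Fintype.card b = n := by
    have := Module.finrank_eq_card_basis hbbasis
    rw [Module.finrank_pi] at this
    simpa using this.symm
  -- choose column indices
  have hchoice : ∀ v : b, ∃ k : Fin m, Φᵀ k = (v : Fin n → 𝕂) := fun v => hbsub v.2
  choose f hf using hchoice
  have hfinj : Function.Injective f := by
    intro v w hvw
    apply Subtype.ext
    rw [← hf v, ← hf w, hvw]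
  let e : b ≃ Fin n := Fintype.equivFinOfCardEq hcard
  let g : Fin n → Fin m := fun t => f (e.symm t)
  have hginj : Function.Injective g := hfinj.comp e.symm.injective
  let A : Matrix (Fin n) (Fin n) 𝕂 := Φ.submatrix id g
  have hAunit : IsUnit A := by
    rw [← Matrix.linearIndependent_cols_iff_isUnit]
    have : (fun t => Aᵀ t) = (fun v : b => (v : Fin n → 𝕂)) ∘ e.symm := by
      funext t
      simp only [Function.comp_apply, ← hf (e.symm t)]
      rfl
    change LinearIndependent 𝕂 (fun t => Aᵀ t)
    rw [this]
    exact hbli.comp e.symm e.symm.injective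
  have hAHdet : IsUnit (Aᴴ).det := by
    rw [Matrix.isUnit_iff_isUnit_det] at hAunit
    rw [Matrix.det_conjTranspose]
    exact hAunit.star
  set B : Matrix (Fin n) (Fin n) 𝕂 := (Aᴴ)⁻¹ with hBdef
  have hB : B * Aᴴ = 1 := Matrix.nonsing_inv_mul _ hAHdet
  refine ⟨fun j k => ∑ t : Fin n, if g t = k then B j t else 0, ?_, ?_⟩
  · ext j i
    change ((Matrix.of fun j k => ∑ t : Fin n, if g t = k then B j t else 0) * Φᴴ) j i = _
    rw [Matrix.mul_apply]
    calc ∑ k, (∑ t, if g t = k then B j t else 0) * Φᴴ k i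
        = ∑ k, ∑ t, if g t = k then B j t * Φᴴ k i else 0 := by
          refine Finset.sum_congr rfl fun k _ => ?_
          rw [Finset.sum_mul]
          exact Finset.sum_congr rfl fun t _ => by rw [ite_mul, zero_mul]
      _ = ∑ t, ∑ k, if g t = k then B j t * Φᴴ k i else 0 := Finset.sum_comm
      _ = ∑ t, B j t * Φᴴ (g t) i := by
          refine Finset.sum_congr rfl fun t _ => ?_
          rw [Finset.sum_ite_eq]
          simp
      _ = ∑ t, B j t * Aᴴ t i := by
          refine Finset.sum_congr rfl fun t _ => ?_
          simp [Matrix.conjTranspose_apply, A]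
      _ = (B * Aᴴ) j i := (Matrix.mul_apply).symm
      _ = (1 : Matrix (Fin n) (Fin n) 𝕂) j i := by rw [hB]
  · -- l0 bound
    have hsubset : {p : Fin n × Fin m |
        (∑ t : Fin n, if g t = p.2 then B p.1 t else 0) ≠ 0}
        ⊆ ↑((Finset.univ : Finset (Fin n)) ×ˢ Finset.univ.image g) := by
      intro p hp
      simp only [Set.mem_setOf_eq] at hp
      simp only [Finset.coe_product, Set.mem_prod, Finset.mem_coe, Finset.mem_image]
      refine ⟨Finset.mem_univ _, ?_⟩
      by_contra hne
      push_neg at hne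
      apply hp
      apply Finset.sum_eq_zero
      intro t _
      rw [if_neg]
      intro hgt
      exact (hne t (Finset.mem_univ _) hgt).elim
    calc l0Norm _ ≤ ((Finset.univ : Finset (Fin n)) ×ˢ Finset.univ.image g).card := by
          rw [← Set.ncard_coe_finset]
          exact Set.ncard_le_ncard hsubset (Finset.finite_toSet _)
      _ ≤ n ^ 2 := by
          rw [Finset.card_product]
          have h1 : (Finset.univ.image g).card ≤ n := by
            refine le_trans Finset.card_image_le ?_
            simp
          have h2 : (Finset.univ : Finset (Fin n)).card = n := by simp
          rw [h2, pow_two]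
          exact Nat.mul_le_mul_left n h1

/-- If each submatrix `Φ^(j)` (delete row `j`) of a frame `Φ` for `𝕂^n`
is in general position, then the minimum of `‖Ψ‖₀` over all dual frames `Ψ` of `Φ`
equals exactly `n²`. -/
theorem isLeast_l0Norm_dual_of_general_position {𝕂 : Type} [RCLike 𝕂] {n m : ℕ}
    (Φ : Matrix (Fin n) (Fin m) 𝕂) (hΦ : Φ.rank = n)
    (hGP : ∀ j : Fin n, InGeneralPosition (deleteRow Φ j) (n - 1)) :
    IsLeast {c | ∃ Ψ : Matrix (Fin n) (Fin m) 𝕂, Ψ * Φᴴ = 1 ∧ l0Norm Ψ = c}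
      (n ^ 2) := by
  classical
  have hm : n ≤ m := by
    have h1 := Φ.rank_le_card_width
    rw [hΦ] at h1
    simpa using h1
  have lower : ∀ Ψ : Matrix (Fin n) (Fin m) 𝕂, Ψ * Φᴴ = 1 → n ^ 2 ≤ l0Norm Ψ := by
    intro Ψ hΨ
    rw [l0_eq_sum]
    calc n ^ 2 = ∑ _j : Fin n, n := by simp [pow_two, mul_comm]
      _ ≤ _ := Finset.sum_le_sum fun j _ => row_card_ge Φ hm hGP Ψ hΨ j
  constructor
  · obtain ⟨Ψ, hΨ, hle⟩ := exists_sparse_dual Φ hΦ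
    exact ⟨Ψ, hΨ, le_antisymm hle (lower Ψ hΨ)⟩
  · rintro c ⟨Ψ, hΨ, rfl⟩
    exact lower Ψ hΨ
end

section
/- Let n ∈ ℕ and let m ≥ n be prime. Let Φ ∈ ℂ^{n×m} be the partial Fourier matrix with entries Φ_{j,k} = exp(2πi·jk/m) for j = 1,…,n and k = 1,…,m. Then every dual frame Ψ of Φ satisfies ‖Ψ‖₀ ≥ n², and the sparsest dual frame of Φ satisfies ‖Ψ‖₀ = n². -/
open Matrix

section ChebotarevAux
open MvPolynomial

noncomputable section
variable {σ : Type*} [DecidableEq σ]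

/-- substituting `X i ↦ X j` changes a polynomial by a multiple of `X i - X j`. -/
lemma sub_dvd_sub_aeval (i j : σ) (f : MvPolynomial σ ℤ) :
    (X i - X j : MvPolynomial σ ℤ) ∣
      f - aeval (fun k => if k = i then X j else X k) f := by
  induction f using MvPolynomial.induction_on with
  | C a => simp
  | add f g hf hg =>
      rw [_root_.map_add]
      have h : f + g - ((aeval fun k => if k = i then X j else X k) f
          + (aeval fun k => if k = i then X j else X k) g)
          = (f - (aeval fun k => if k = i then X j else X k) f)
          + (g - (aeval fun k => if k = i then X j else X k) g) := by ring
      rw [h]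
      exact dvd_add hf hg
  | mul_X f k hf =>
      rw [_root_.map_mul, aeval_X]
      have h : f * X k - (aeval fun k => if k = i then X j else X k) f *
          (if k = i then X j else X k)
          = (f - (aeval fun k => if k = i then X j else X k) f) * X k
          + (aeval fun k => if k = i then X j else X k) f *
            (X k - if k = i then X j else X k) := by ring
      rw [h]
      refine dvd_add (hf.mul_right _) (Dvd.dvd.mul_left ?_ _)
      by_cases h : k = i <;> simp [h]

lemma prime_X_sub_X {i j : σ} (h : j ≠ i) :
    Prime (X j - X i : MvPolynomial σ ℤ) := by
  let E := ((renameEquiv ℤ (Equiv.optionSubtypeNe i)).symm.trans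
    (optionEquivLeft ℤ {b : σ // b ≠ i})).toRingEquiv.toMulEquiv
  rw [← MulEquiv.prime_iff E]
  have hE : E (X j - X i) = Polynomial.C (X ⟨j, h⟩) - Polynomial.X := by
    show ((renameEquiv ℤ (Equiv.optionSubtypeNe i)).symm.trans
      (optionEquivLeft ℤ {b : σ // b ≠ i})) (X j - X i) = _
    rw [_root_.map_sub]
    simp only [AlgEquiv.trans_apply, renameEquiv_symm, renameEquiv_apply, rename_X,
      Equiv.optionSubtypeNe_symm_self, Equiv.optionSubtypeNe_symm_of_ne h,
      optionEquivLeft_X_some, optionEquivLeft_X_none]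
  rw [hE, ← neg_sub]
  exact (Polynomial.prime_X_sub_C _).neg
end

noncomputable section
open Matrix Finset
variable {s : ℕ} (a : Fin s → ℕ)

def Pdet : MvPolynomial (Fin s) ℤ :=
  (Matrix.of fun j k : Fin s => (X j : MvPolynomial (Fin s) ℤ) ^ a k).det

lemma X_sub_X_dvd_Pdet {i j : Fin s} (hij : i < j) :
    (X j - X i : MvPolynomial (Fin s) ℤ) ∣ Pdet a := by
  have h0 : (aeval fun k : Fin s => if k = j then X i else
      (X k : MvPolynomial (Fin s) ℤ)) (Pdet a) = 0 := by
    unfold Pdet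
    rw [show ((aeval fun k : Fin s => if k = j then X i else (X k : MvPolynomial (Fin s) ℤ)))
        ((Matrix.of fun j k : Fin s => (X j : MvPolynomial (Fin s) ℤ) ^ a k).det)
      = ((aeval fun k : Fin s => if k = j then X i else
          (X k : MvPolynomial (Fin s) ℤ)).toRingHom.mapMatrix
          (Matrix.of fun j k : Fin s => (X j : MvPolynomial (Fin s) ℤ) ^ a k)).det
      from RingHom.map_det _ _]
    apply Matrix.det_zero_of_row_eq hij.ne
    funext k
    simp [hij.ne]
  have := sub_dvd_sub_aeval j i (Pdet a)
  rw [h0, sub_zero] at this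
  exact this

lemma prod_X_sub_X_dvd_Pdet :
    (∏ x ∈ Finset.univ.sigma (fun i : Fin s => Finset.Ioi i),
      ((X x.2 - X x.1 : MvPolynomial (Fin s) ℤ))) ∣ Pdet a := by
  classical
  rw [Finset.prod_eq_multiset_prod]
  apply Multiset.prod_primes_dvd
  · intro q hq
    obtain ⟨x, hx, rfl⟩ := Multiset.mem_map.1 hq
    rw [Finset.mem_def.symm, Finset.mem_sigma, Finset.mem_Ioi] at hx
    exact prime_X_sub_X hx.2.ne'
  · intro q hq
    obtain ⟨x, hx, rfl⟩ := Multiset.mem_map.1 hq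
    rw [Finset.mem_def.symm, Finset.mem_sigma, Finset.mem_Ioi] at hx
    exact X_sub_X_dvd_Pdet a hx.2
  · intro g
    have : Multiset.countP (Associated g)
        (Multiset.map (fun x : Σ _ : Fin s, Fin s => (X x.2 - X x.1 : MvPolynomial (Fin s) ℤ))
          (Finset.univ.sigma (fun i : Fin s => Finset.Ioi i)).val)
        = ((Finset.univ.sigma (fun i : Fin s => Finset.Ioi i)).filter
            (fun x => Associated g (X x.2 - X x.1))).card := by
      rw [Multiset.countP_map]
      rfl
    rw [this]
    apply Finset.card_le_one.2
    intro x hx y hy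
    rw [Finset.mem_filter, Finset.mem_sigma, Finset.mem_Ioi] at hx hy
    have hxy : (X x.2 - X x.1 : MvPolynomial (Fin s) ℤ) ∣ (X y.2 - X y.1) :=
      (hx.2.symm.trans hy.2).dvd
    obtain ⟨c, hc⟩ := hxy
    have h0 : (aeval fun k : Fin s => if k = x.2 then X x.1 else
        (X k : MvPolynomial (Fin s) ℤ)) ((X y.2 : MvPolynomial (Fin s) ℤ) - X y.1) = 0 := by
      rw [hc, _root_.map_mul, _root_.map_sub, aeval_X, aeval_X, if_pos rfl, ite_self,
        sub_self, zero_mul]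
    rw [_root_.map_sub, aeval_X, aeval_X, sub_eq_zero] at h0
    have hsub : (if y.2 = x.2 then X x.1 else (X y.2 : MvPolynomial (Fin s) ℤ))
        = (if y.1 = x.2 then X x.1 else X y.1) := h0
    have hXinj : Function.Injective (X : Fin s → MvPolynomial (Fin s) ℤ) :=
      X_injective
    by_cases h2 : y.2 = x.2 <;> by_cases h1 : y.1 = x.2
    · exact absurd (h1 ▸ h2 : y.2 = y.1) hy.1.2.ne'
    · rw [if_pos h2, if_neg h1] at hsub
      have : x.1 = y.1 := hXinj hsub
      exact Sigma.ext (this ▸ rfl) (by simp [h2])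
    · rw [if_neg h2, if_pos h1] at hsub
      have hy2 : y.2 = x.1 := hXinj hsub
      -- y.1 = x.2, y.2 = x.1, but y.1 < y.2 and x.1 < x.2 : contradiction
      exact absurd (hy2 ▸ (h1 ▸ hy.1.2 : x.2 < y.2)) (lt_asymm hx.1.2)
    · rw [if_neg h2, if_neg h1] at hsub
      exact absurd (hXinj hsub) hy.1.2.ne'
end
noncomputable section

lemma eval_one_aeval {s : ℕ} (g : Fin s → Polynomial ℤ) (hg : ∀ j, (g j).eval 1 = 1)
    (Q : MvPolynomial (Fin s) ℤ) :
    ((aeval g) Q).eval 1 = MvPolynomial.eval (fun _ => (1:ℤ)) Q := by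
  induction Q using MvPolynomial.induction_on with
  | C a => simp
  | add f g' hf hg' => simp [hf, hg']
  | mul_X f k hf => simp [hf, hg k]

lemma pow_sub_pow_factor {c d : ℕ} (h : c < d) :
    (Polynomial.X : Polynomial ℤ)^d - Polynomial.X^c
      = (Polynomial.X^c * ∑ i ∈ Finset.range (d - c), Polynomial.X^i)
        * (Polynomial.X - 1) := by
  rw [mul_assoc, geom_sum_mul, mul_sub, mul_one, ← pow_add, Nat.add_sub_cancel' h.le]
end

open Polynomial in
lemma chebotarev {p s : ℕ} (hp : p.Prime) {ζ : ℂ} (hζ : IsPrimitiveRoot ζ p)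
    (a b : Fin s → ℕ) (haS : StrictMono a) (haD : ∀ k l : Fin s, k < l → a l - a k < p)
    (hb : Function.Injective fun j => ζ ^ b j) :
    (Matrix.of fun j k : Fin s => ζ ^ (b j * a k)).det ≠ 0 := by
  classical
  intro hdet
  haveI : Fact p.Prime := ⟨hp⟩
  set S : Finset (Σ _ : Fin s, Fin s) := Finset.univ.sigma fun i => Finset.Ioi i with hS
  have hxS : ∀ x ∈ S, x.1 < x.2 := by
    intro x hx
    rw [hS, Finset.mem_sigma, Finset.mem_Ioi] at hx
    exact hx.2
  obtain ⟨Q, hQ⟩ := prod_X_sub_X_dvd_Pdet a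
  set α : MvPolynomial (Fin s) ℤ →ₐ[ℤ] Polynomial ℤ :=
    (aeval (fun j : Fin s => (Polynomial.X : Polynomial ℤ) ^ b j)) with hα
  set β : MvPolynomial (Fin s) ℤ →ₐ[ℤ] Polynomial ℤ :=
    (aeval (fun j : Fin s => (Polynomial.X : Polynomial ℤ) ^ (j : ℕ))) with hβ
  set g : MvPolynomial (Fin s) ℤ →+* ℂ :=
    (Polynomial.aeval ζ).toRingHom.comp α.toRingHom with hg
  -- the determinant over ℂ is the image of Pdet
  have hPg : g (Pdet a) = (Matrix.of fun j k : Fin s => ζ ^ (b j * a k)).det := by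
    unfold Pdet
    rw [RingHom.map_det]
    congr 1
    funext j k
    simp only [RingHom.mapMatrix_apply, Matrix.map_apply, Matrix.of_apply, hg,
      RingHom.comp_apply, AlgHom.toRingHom_eq_coe, RingHom.coe_coe, hα,
      _root_.map_pow, MvPolynomial.aeval_X, Polynomial.aeval_X]
    rw [← pow_mul]
  -- apply g to the factorization
  have hfact := congrArg g hQ
  rw [_root_.map_mul, hPg, hdet, _root_.map_prod] at hfact
  have hgV : ∀ x ∈ S, g (X x.2 - X x.1) = ζ ^ b x.2 - ζ ^ b x.1 := by
    intro x _
    simp [hg, hα]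
  rw [Finset.prod_congr rfl hgV] at hfact
  have hVne : (∏ x ∈ S, (ζ ^ b x.2 - ζ ^ b x.1)) ≠ 0 := by
    apply Finset.prod_ne_zero_iff.2
    intro x hx
    exact sub_ne_zero_of_ne fun h => (hxS x hx).ne' (hb h)
  have hq0 : (Polynomial.aeval ζ) (α Q) = 0 := by
    have := hfact.symm
    rcases mul_eq_zero.1 this with h | h
    · exact absurd h hVne
    · exact h
  -- cyclotomic divisibility
  have hcyc : Polynomial.cyclotomic p ℤ ∣ α Q := by
    rw [Polynomial.cyclotomic_eq_minpoly hζ hp.pos]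
    exact minpoly.isIntegrallyClosed_dvd (hζ.isIntegral hp.pos) hq0
  obtain ⟨h₁, hh₁⟩ := hcyc
  have hpq : (p : ℤ) ∣ (α Q).eval 1 := by
    rw [hh₁, Polynomial.eval_mul, Polynomial.eval_one_cyclotomic_prime]
    exact Dvd.intro _ rfl
  -- β side
  have hfactβ := congrArg β hQ
  have hPβ : β (Pdet a) = ∏ x ∈ S, ((Polynomial.X : Polynomial ℤ) ^ a x.2 - Polynomial.X ^ a x.1) := by
    unfold Pdet
    rw [show β ((Matrix.of fun j k : Fin s => (X j : MvPolynomial (Fin s) ℤ) ^ a k).det)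
        = β.toRingHom ((Matrix.of fun j k : Fin s => (X j : MvPolynomial (Fin s) ℤ) ^ a k).det)
      from rfl]
    rw [RingHom.map_det]
    have hM : β.toRingHom.mapMatrix (Matrix.of fun j k : Fin s => (X j : MvPolynomial (Fin s) ℤ) ^ a k)
        = Matrix.transpose (Matrix.vandermonde fun k : Fin s => (Polynomial.X : Polynomial ℤ) ^ a k) := by
      funext j k
      simp only [RingHom.mapMatrix_apply, Matrix.map_apply, Matrix.of_apply, hβ,
        AlgHom.toRingHom_eq_coe, RingHom.coe_coe, _root_.map_pow, MvPolynomial.aeval_X,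
        Matrix.transpose_apply, Matrix.vandermonde_apply]
      rw [← pow_mul, ← pow_mul, mul_comm]
    rw [hM, Matrix.det_transpose, Matrix.det_vandermonde, hS, Finset.prod_sigma]
  have hVβ : β (∏ x ∈ S, (X x.2 - X x.1 : MvPolynomial (Fin s) ℤ))
      = ∏ x ∈ S, ((Polynomial.X : Polynomial ℤ) ^ (x.2 : ℕ) - Polynomial.X ^ (x.1 : ℕ)) := by
    rw [_root_.map_prod]
    exact Finset.prod_congr rfl fun x _ => by simp [hβ]
  rw [hPβ, _root_.map_mul, hVβ] at hfactβ
  -- factor out (X - 1) powers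
  set G : ℕ → Polynomial ℤ := fun d => ∑ i ∈ Finset.range d, Polynomial.X ^ i with hG
  have hL : ∏ x ∈ S, ((Polynomial.X : Polynomial ℤ) ^ a x.2 - Polynomial.X ^ a x.1)
      = (∏ x ∈ S, (Polynomial.X ^ a x.1 * G (a x.2 - a x.1)))
        * (Polynomial.X - 1) ^ S.card := by
    rw [← Finset.prod_const, ← Finset.prod_mul_distrib]
    exact Finset.prod_congr rfl fun x hx => pow_sub_pow_factor (haS (hxS x hx))
  have hR : ∏ x ∈ S, ((Polynomial.X : Polynomial ℤ) ^ (x.2 : ℕ) - Polynomial.X ^ (x.1 : ℕ))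
      = (∏ x ∈ S, (Polynomial.X ^ (x.1 : ℕ) * G ((x.2 : ℕ) - (x.1 : ℕ))))
        * (Polynomial.X - 1) ^ S.card := by
    rw [← Finset.prod_const, ← Finset.prod_mul_distrib]
    exact Finset.prod_congr rfl fun x hx => pow_sub_pow_factor (hxS x hx)
  rw [hL, hR] at hfactβ
  have hcancel : (∏ x ∈ S, ((Polynomial.X : Polynomial ℤ) ^ a x.1 * G (a x.2 - a x.1)))
      = (∏ x ∈ S, ((Polynomial.X : Polynomial ℤ) ^ (x.1 : ℕ) * G ((x.2 : ℕ) - (x.1 : ℕ)))) * β Q := by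
    have hne : ((Polynomial.X : Polynomial ℤ) - 1) ^ S.card ≠ 0 := by
      apply pow_ne_zero
      intro h
      have := congrArg (Polynomial.eval 0) h
      simp at this
    apply mul_right_cancel₀ hne
    rw [hfactβ]; ring
  -- evaluate at 1
  have heval := congrArg (Polynomial.eval 1) hcancel
  have hGone : ∀ d : ℕ, (G d).eval 1 = (d : ℤ) := by
    intro d
    rw [hG]
    simp [Polynomial.eval_finset_sum]
  rw [Polynomial.eval_mul, Polynomial.eval_prod, Polynomial.eval_prod] at heval
  have hLv : ∀ x ∈ S, (((Polynomial.X : Polynomial ℤ) ^ a x.1 * G (a x.2 - a x.1))).eval 1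
      = ((a x.2 - a x.1 : ℕ) : ℤ) := by
    intro x _
    rw [Polynomial.eval_mul, Polynomial.eval_pow, Polynomial.eval_X, one_pow, one_mul, hGone]
  rw [Finset.prod_congr rfl hLv] at heval
  -- q eval 1 relation
  have hqeq : (β Q).eval 1 = (α Q).eval 1 := by
    rw [hα, hβ, eval_one_aeval _ (fun j => by simp), eval_one_aeval _ (fun j => by simp)]
  -- p divides the left product
  have hdvdL : (p : ℤ) ∣ ∏ x ∈ S, ((a x.2 - a x.1 : ℕ) : ℤ) := by
    rw [heval, hqeq]
    exact Dvd.dvd.mul_left hpq _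
  obtain ⟨x, hxmem, hxdvd⟩ := ((Nat.prime_iff_prime_int.1 hp).dvd_finset_prod_iff _).1 hdvdL
  rw [Int.natCast_dvd_natCast] at hxdvd
  have hpos : 0 < a x.2 - a x.1 := Nat.sub_pos_of_lt (haS (hxS x hxmem))
  exact absurd (Nat.le_of_dvd hpos hxdvd) (not_le.2 (haD x.1 x.2 (hxS x hxmem)))

lemma row_support_lower {n m : ℕ} (hm : Nat.Prime m) (hnm : n ≤ m)
    {ξ : ℂ} (hξ : IsPrimitiveRoot ξ m) (u : Fin m → ℂ) (i : Fin n)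
    (hu : ∀ j : Fin n, ∑ k : Fin m, u k * ξ ^ (((j:ℕ)+1) * ((k:ℕ)+1))
      = if j = i then 1 else 0) :
    n ≤ (Finset.univ.filter fun k : Fin m => u k ≠ 0).card := by
  classical
  by_contra hlt
  push_neg at hlt
  set T := Finset.univ.filter (fun k : Fin m => u k ≠ 0) with hT
  have hres : ∀ j : Fin n, ∑ k ∈ T, u k * ξ ^ (((j:ℕ)+1) * ((k:ℕ)+1))
      = if j = i then 1 else 0 := by
    intro j
    rw [← hu j]
    apply Finset.sum_subset (Finset.subset_univ T)
    intro k _ hk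
    have hk0 : u k = 0 := by
      by_contra h
      exact hk (Finset.mem_filter.2 ⟨Finset.mem_univ _, h⟩)
    rw [hk0, zero_mul]
  rcases Nat.eq_zero_or_pos T.card with hs0 | hs1
  · have hTe : T = ∅ := Finset.card_eq_zero.1 hs0
    have h1 := hres i
    rw [hTe, Finset.sum_empty, if_pos rfl] at h1
    exact zero_ne_one h1
  · set s := T.card with hs
    have hcard : s ≤ (Finset.univ.erase i).card := by
      rw [Finset.card_erase_of_mem (Finset.mem_univ i), Finset.card_univ, Fintype.card_fin]
      omega
    obtain ⟨R, hRsub, hRcard⟩ := Finset.exists_subset_card_eq hcard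
    set ρ := R.orderIsoOfFin hRcard with hρ
    set τ := T.orderIsoOfFin rfl with hτ
    have hξne : ξ ≠ 0 := hξ.ne_zero hm.ne_zero
    have hdet : (Matrix.of fun j' k' : Fin s =>
        ξ ^ ((((ρ j' : Fin n) : ℕ) + 1) * (((τ k' : Fin m) : ℕ) + 1))).det ≠ 0 := by
      exact chebotarev hm hξ (fun k' => ((τ k' : Fin m) : ℕ) + 1)
        (fun j' => ((ρ j' : Fin n) : ℕ) + 1)
        (by
          intro k l hkl
          have h1 : ((τ k : Fin m) : ℕ) < ((τ l : Fin m) : ℕ) :=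
            Fin.lt_def.1 (Subtype.coe_lt_coe.2 (τ.strictMono hkl))
          show ((τ k : Fin m) : ℕ) + 1 < ((τ l : Fin m) : ℕ) + 1
          omega)
        (by
          intro k l _
          have h1 : ((τ l : Fin m) : ℕ) < m := (τ l : Fin m).2
          show ((τ l : Fin m) : ℕ) + 1 - (((τ k : Fin m) : ℕ) + 1) < m
          omega)
        (by
          intro j j' h
          simp only [pow_succ] at h
          have h2 := mul_right_cancel₀ hξne h
          have h3 : ((ρ j : Fin n) : ℕ) = ((ρ j' : Fin n) : ℕ) :=
            hξ.pow_inj (lt_of_lt_of_le (ρ j : Fin n).2 hnm)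
              (lt_of_lt_of_le (ρ j' : Fin n).2 hnm) h2
          have h4 : (ρ j : Fin n) = (ρ j' : Fin n) := Fin.ext h3
          have h5 : ρ j = ρ j' := Subtype.ext h4
          exact ρ.injective h5)
    have hMu : (Matrix.of fun j' k' : Fin s =>
        ξ ^ ((((ρ j' : Fin n) : ℕ) + 1) * (((τ k' : Fin m) : ℕ) + 1))).mulVec
        (fun k' => u (τ k')) = 0 := by
      funext j'
      have hsum : ∑ k' : Fin s, ξ ^ ((((ρ j' : Fin n) : ℕ) + 1) * (((τ k' : Fin m) : ℕ) + 1))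
          * u (τ k')
          = ∑ k ∈ T, u k * ξ ^ ((((ρ j' : Fin n) : ℕ)+1) * ((k:ℕ)+1)) := by
        rw [← Finset.sum_coe_sort T
          (fun k => u k * ξ ^ ((((ρ j' : Fin n) : ℕ)+1) * ((k:ℕ)+1)))]
        exact Fintype.sum_equiv τ.toEquiv _ _ (fun k' => by rw [mul_comm]; rfl)
      have hne : (ρ j' : Fin n) ≠ i := by
        have := hRsub (ρ j').2
        exact Finset.ne_of_mem_erase this
      show (∑ k' : Fin s, ξ ^ ((((ρ j' : Fin n) : ℕ) + 1) * (((τ k' : Fin m) : ℕ) + 1))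
          * u (τ k')) = 0
      rw [hsum, hres (ρ j' : Fin n), if_neg hne]
    have hzero := Matrix.eq_zero_of_mulVec_eq_zero hdet hMu
    have h0 : u (τ ⟨0, hs1⟩) = 0 := congrFun hzero ⟨0, hs1⟩
    have hmem := (τ ⟨0, hs1⟩).2
    exact (Finset.mem_filter.1 hmem).2 h0


lemma l0Norm_eq_sum {n m : ℕ} (Ψ : Matrix (Fin n) (Fin m) ℂ) :
    l0Norm Ψ = ∑ i : Fin n, (Finset.univ.filter fun k : Fin m => Ψ i k ≠ 0).card := by
  classical
  rw [l0Norm, Set.ncard_eq_toFinset_card', Set.toFinset_setOf, Finset.card_filter,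
    Fintype.sum_prod_type]
  refine Finset.sum_congr rfl fun i _ => ?_
  rw [Finset.card_filter]


end ChebotarevAux

/-- Let `m ≥ n` be prime and let `Φ ∈ ℂ^{n×m}` be the partial Fourier
matrix with entries `Φ_{j,k} = exp(2πi·jk/m)` for `j = 1,…,n`, `k = 1,…,m`. Then every
dual frame `Ψ` of `Φ` satisfies `‖Ψ‖₀ ≥ n²`, and the sparsest dual satisfies
`‖Ψ‖₀ = n²`. -/
theorem partial_fourier_sparsest_dual {n m : ℕ} (hm : Nat.Prime m) (hnm : n ≤ m)
    (Φ : Matrix (Fin n) (Fin m) ℂ)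
    (hΦ : ∀ (j : Fin n) (k : Fin m),
      Φ j k = Complex.exp (2 * Real.pi * Complex.I *
        (((j : ℕ) + 1) * ((k : ℕ) + 1)) / m)) :
    (∀ Ψ : Matrix (Fin n) (Fin m) ℂ, Ψ * Φᴴ = 1 → n ^ 2 ≤ l0Norm Ψ) ∧
    IsLeast {c | ∃ Ψ : Matrix (Fin n) (Fin m) ℂ, Ψ * Φᴴ = 1 ∧ l0Norm Ψ = c}
      (n ^ 2) := by
  classical
  have hm0 : (m : ℕ) ≠ 0 := hm.ne_zero
  set ζ : ℂ := Complex.exp (2 * Real.pi * Complex.I / m) with hζdef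
  have hζ : IsPrimitiveRoot ζ m := Complex.isPrimitiveRoot_exp m hm0
  have hζne : ζ ≠ 0 := hζ.ne_zero hm0
  set ξ : ℂ := ζ⁻¹ with hξdef
  have hξ : IsPrimitiveRoot ξ m := hζ.inv
  have hΦζ : ∀ (j : Fin n) (k : Fin m), Φ j k = ζ ^ (((j:ℕ)+1) * ((k:ℕ)+1)) := by
    intro j k
    rw [hΦ, hζdef, ← Complex.exp_nat_mul]
    congr 1
    push_cast
    ring
  have hstarζ : star ζ = ξ := by
    rw [hζdef, hξdef]
    show (starRingEnd ℂ) _ = _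
    rw [← Complex.exp_conj, ← Complex.exp_neg]
    congr 1
    have h2 : (starRingEnd ℂ) 2 = 2 := by
      rw [show (2:ℂ) = ((2:ℝ):ℂ) by norm_num, Complex.conj_ofReal]
    simp [map_div₀, h2]
    ring
  have hstarΦ : ∀ (j : Fin n) (k : Fin m),
      star (Φ j k) = ξ ^ (((j:ℕ)+1) * ((k:ℕ)+1)) := by
    intro j k
    rw [hΦζ, star_pow, hstarζ]
  -- lower bound
  have hlower : ∀ Ψ : Matrix (Fin n) (Fin m) ℂ, Ψ * Φᴴ = 1 → n ^ 2 ≤ l0Norm Ψ := by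
    intro Ψ hΨ
    rw [l0Norm_eq_sum]
    have hrow : ∀ i : Fin n,
        n ≤ (Finset.univ.filter fun k : Fin m => Ψ i k ≠ 0).card := by
      intro i
      apply row_support_lower hm hnm hξ (fun k => Ψ i k) i
      intro j
      have hent : (Ψ * Φᴴ) i j = (1 : Matrix (Fin n) (Fin n) ℂ) i j := by rw [hΨ]
      rw [Matrix.mul_apply] at hent
      calc ∑ k : Fin m, Ψ i k * ξ ^ (((j:ℕ)+1) * ((k:ℕ)+1))
          = ∑ k : Fin m, Ψ i k * Φᴴ k j := by
            refine Finset.sum_congr rfl fun k _ => ?_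
            rw [Matrix.conjTranspose_apply, hstarΦ]
        _ = (1 : Matrix (Fin n) (Fin n) ℂ) i j := hent
        _ = if j = i then 1 else 0 := by
            rw [Matrix.one_apply]
            exact if_congr eq_comm rfl rfl
    calc n ^ 2 = ∑ _i : Fin n, n := by
          rw [Finset.sum_const, Finset.card_univ, Fintype.card_fin, smul_eq_mul, sq]
      _ ≤ _ := Finset.sum_le_sum fun i _ => hrow i
  refine ⟨hlower, ?_, ?_⟩
  · -- membership : a dual with l0Norm = n ^ 2
    set v : Fin n → ℂ := fun k => ζ ^ ((k : ℕ) + 1) with hv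
    set N : Matrix (Fin n) (Fin n) ℂ :=
      Matrix.of fun j k : Fin n => Φ j (Fin.castLE hnm k) with hN
    have hNeq : N = (Matrix.vandermonde v)ᵀ * Matrix.diagonal v := by
      funext j k
      rw [show ((Matrix.vandermonde v)ᵀ * Matrix.diagonal v) j k
          = (Matrix.vandermonde v)ᵀ j k * v k from Matrix.mul_diagonal _ _ _ _]
      show Φ j (Fin.castLE hnm k) = (Matrix.vandermonde v) k j * v k
      rw [Matrix.vandermonde_apply, hΦζ]
      show ζ ^ (((j:ℕ)+1) * (((Fin.castLE hnm k : Fin m) : ℕ)+1))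
          = (ζ ^ ((k:ℕ)+1)) ^ (j:ℕ) * ζ ^ ((k:ℕ)+1)
      rw [Fin.coe_castLE, ← pow_succ, ← pow_mul]
      congr 1
      ring
    have hvinj : ∀ p q : Fin n, v p = v q → p = q := by
      intro p q h
      rw [hv] at h
      simp only [pow_succ] at h
      have h2 := mul_right_cancel₀ hζne h
      exact Fin.ext (hζ.pow_inj (lt_of_lt_of_le p.2 hnm) (lt_of_lt_of_le q.2 hnm) h2)
    have hdetN : N.det ≠ 0 := by
      rw [hNeq, Matrix.det_mul, Matrix.det_transpose, Matrix.det_vandermonde,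
        Matrix.det_diagonal]
      apply mul_ne_zero
      · rw [Finset.prod_ne_zero_iff]
        intro p _
        rw [Finset.prod_ne_zero_iff]
        intro q hq
        rw [Finset.mem_Ioi] at hq
        exact sub_ne_zero_of_ne fun h => hq.ne' (hvinj _ _ h)
      · rw [Finset.prod_ne_zero_iff]
        intro p _
        exact pow_ne_zero _ hζne
    have hdetNH : IsUnit (Nᴴ).det := by
      rw [Matrix.det_conjTranspose]
      exact isUnit_iff_ne_zero.2 (star_ne_zero.2 hdetN)
    set B : Matrix (Fin n) (Fin n) ℂ := (Nᴴ)⁻¹ with hB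
    have hBN : B * Nᴴ = 1 := Matrix.nonsing_inv_mul _ hdetNH
    set Ψ₀ : Matrix (Fin n) (Fin m) ℂ :=
      Matrix.of fun (i : Fin n) (k : Fin m) =>
        if h : (k : ℕ) < n then B i ⟨(k : ℕ), h⟩ else 0 with hΨ₀
    set emb : Fin n ↪ Fin m := ⟨Fin.castLE hnm, Fin.castLE_injective hnm⟩ with hemb
    have hmememb : ∀ k : Fin m, k ∈ Finset.univ.map emb ↔ (k : ℕ) < n := by
      intro k
      rw [Finset.mem_map]
      constructor
      · rintro ⟨a, -, rfl⟩
        exact a.2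
      · intro h
        exact ⟨⟨(k : ℕ), h⟩, Finset.mem_univ _, Fin.ext rfl⟩
    have hprod : Ψ₀ * Φᴴ = 1 := by
      funext i j
      show (Ψ₀ * Φᴴ) i j = (1 : Matrix (Fin n) (Fin n) ℂ) i j
      rw [Matrix.mul_apply]
      have hzero : ∀ k ∈ Finset.univ, k ∉ Finset.univ.map emb →
          Ψ₀ i k * Φᴴ k j = 0 := by
        intro k _ hk
        rw [hmememb] at hk
        show (if h : (k : ℕ) < n then B i ⟨(k : ℕ), h⟩ else 0) * _ = 0
        rw [dif_neg hk, zero_mul]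
      rw [← Finset.sum_subset (Finset.subset_univ _) hzero, Finset.sum_map]
      have hterm : ∀ k' ∈ Finset.univ,
          Ψ₀ i (emb k') * Φᴴ (emb k') j = B i k' * Nᴴ k' j := by
        intro k' _
        congr 1
        · show (if h : ((emb k' : Fin m) : ℕ) < n
              then B i ⟨((emb k' : Fin m) : ℕ), h⟩ else 0) = B i k'
          rw [dif_pos (by exact k'.2 : ((emb k' : Fin m) : ℕ) < n)]
          exact congrArg (B i) (Fin.ext rfl)
      rw [Finset.sum_congr rfl hterm, ← Matrix.mul_apply, hBN]
    refine ⟨Ψ₀, hprod, le_antisymm ?_ (hlower Ψ₀ hprod)⟩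
    rw [l0Norm_eq_sum]
    have hrowle : ∀ i : Fin n,
        (Finset.univ.filter fun k : Fin m => Ψ₀ i k ≠ 0).card ≤ n := by
      intro i
      have hsub : (Finset.univ.filter fun k : Fin m => Ψ₀ i k ≠ 0)
          ⊆ Finset.univ.map emb := by
        intro k hk
        rw [Finset.mem_filter] at hk
        rw [hmememb]
        by_contra h
        exact hk.2 (by show (if h' : (k:ℕ) < n then B i ⟨(k:ℕ), h'⟩ else 0) = 0
                       rw [dif_neg h])
      calc (Finset.univ.filter fun k : Fin m => Ψ₀ i k ≠ 0).card
          ≤ (Finset.univ.map emb).card := Finset.card_le_card hsub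
        _ = n := by rw [Finset.card_map, Finset.card_univ, Fintype.card_fin]
    calc ∑ i : Fin n, (Finset.univ.filter fun k : Fin m => Ψ₀ i k ≠ 0).card
        ≤ ∑ _i : Fin n, n := Finset.sum_le_sum fun i _ => hrowle i
      _ = n ^ 2 := by
          rw [Finset.sum_const, Finset.card_univ, Fintype.card_fin, smul_eq_mul, sq]
  · rintro c ⟨Ψ, hΨ, rfl⟩
    exact hlower Ψ hΨ
end
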